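/- Let n, r, d, i, k be natural numbers with 2 ≤ d, d+1 ≤ i ≤ k−1, and let N be a k-element set. Suppose H_1, …, H_r are proper subsets of N, pairwise distinct, with |H_{j1} ∩ H_{j2}| ≤ d−2 for j1 ≠ j2. If S is a uniformly random i-element subset of N, then P(S ⊆ H_j for some j) ≤ (k − i)/k; equivalently, the number of i-subsets of N contained in some H_j is at most C(k−1, i) = C(k,i)·(k−i)/k. -/

import Mathlib

theorem stmt_18 {α : Type*} [DecidableEq α] (d i k r : ℕ) (hd : 2 ≤ d)
    (hi : d + 1 ≤ i) (hik : i ≤ k - 1) (N : Finset α) (hN : N.card = k)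
    (H : Fin r → Finset α) (hprop : ∀ j, H j ⊂ N)
    (hpair : ∀ j1 j2 : Fin r, j1 ≠ j2 →
      H j1 ≠ H j2 ∧ (H j1 ∩ H j2).card ≤ d - 2) :
    (((N.powersetCard i).filter (fun S => ∃ j : Fin r, S ⊆ H j)).card ≤
        (k - 1).choose i) ∧
    ((((N.powersetCard i).filter (fun S => ∃ j : Fin r, S ⊆ H j)).card : ℚ) /
        (k.choose i : ℚ) ≤ ((k : ℚ) - (i : ℚ)) / (k : ℚ)) := by
  classical
  have hk : d + 2 ≤ k := by omega
  have hHcard : ∀ j, (H j).card ≤ k - 1 := by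
    intro j
    have h := Finset.card_lt_card (hprop j)
    omega
  have hsame : ∀ (j j' : Fin r) (S S' : Finset α), S ⊆ H j → S' ⊆ H j' →
      d - 1 ≤ (S ∩ S').card → H j = H j' := by
    intro j j' S S' h1 h2 hcard
    by_cases hjj : j = j'
    · rw [hjj]
    · have h3 := (hpair j j' hjj).2
      have h4 : (S ∩ S').card ≤ (H j ∩ H j').card :=
        Finset.card_le_card (Finset.inter_subset_inter h1 h2)
      omega
  have hmain : ∀ n m, k - 1 - m = n → d ≤ m → m ≤ k - 1 →
      ((N.powersetCard m).filter (fun S => ∃ j : Fin r, S ⊆ H j)).card ≤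
        (k - 1).choose m := by
    intro n
    induction n with
    | zero =>
      intro m hn hdm hmk
      have hm : m = k - 1 := by omega
      subst hm
      rw [Nat.choose_self]
      apply Finset.card_le_one.mpr
      intro S hS S' hS'
      rw [Finset.mem_filter, Finset.mem_powersetCard] at hS hS'
      obtain ⟨⟨hSN, hScard⟩, j, hSj⟩ := hS
      obtain ⟨⟨hS'N, hS'card⟩, j', hS'j⟩ := hS'
      have hSH : S = H j :=
        Finset.eq_of_subset_of_card_le hSj (by rw [hScard]; exact hHcard j)
      have hS'H : S' = H j' :=
        Finset.eq_of_subset_of_card_le hS'j (by rw [hS'card]; exact hHcard j')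
      have hU : (S ∪ S').card ≤ k := by
        rw [← hN]; exact Finset.card_le_card (Finset.union_subset hSN hS'N)
      have hint := Finset.card_union_add_card_inter S S'
      have hd1 : d - 1 ≤ (S ∩ S').card := by omega
      have := hsame j j' S S' hSj hS'j hd1
      rw [hSH, hS'H, this]
    | succ n ih =>
      intro m hn hdm hmk
      have hm1 : m + 1 ≤ k - 1 := by omega
      have hIH := ih (m + 1) (by omega) (by omega) hm1
      set cov1 : Finset (Finset α) :=
        (N.powersetCard (m + 1)).filter (fun S => ∃ j : Fin r, S ⊆ H j) with hcov1
      set covm : Finset (Finset α) :=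
        (N.powersetCard m).filter (fun S => ∃ j : Fin r, S ⊆ H j) with hcovm
      set P : Finset (Finset α × Finset α) :=
        ((N.powersetCard (m + 1)) ×ˢ covm).filter (fun p => p.2 ⊆ p.1) with hP
      have hmemP : ∀ p : Finset α × Finset α, p ∈ P ↔
          (p.1 ⊆ N ∧ p.1.card = m + 1) ∧ p.2 ∈ covm ∧ p.2 ⊆ p.1 := by
        intro p
        simp only [hP, Finset.mem_filter, Finset.mem_product, Finset.mem_powersetCard]
        tauto
      -- lower bound on P.card
      have hlow : (k - m) * covm.card ≤ P.card := by
        have hfib := Finset.card_eq_sum_card_fiberwise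
          (f := Prod.snd) (s := P) (t := covm)
          (fun p hp => ((hmemP p).mp hp).2.1)
        rw [hfib]
        rw [mul_comm, ← smul_eq_mul]
        rw [← Finset.sum_const]
        apply Finset.sum_le_sum
        intro S hS
        have hSmem := hS
        rw [hcovm, Finset.mem_filter, Finset.mem_powersetCard] at hSmem
        obtain ⟨⟨hSN, hScard⟩, hScov⟩ := hSmem
        have hdiff : (N \ S).card = k - m := by
          rw [Finset.card_sdiff_of_subset hSN, hN, hScard]
        rw [← hdiff]
        apply Finset.card_le_card_of_injOn (fun x => (insert x S, S))
        · intro x hx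
          rw [Finset.mem_coe, Finset.mem_sdiff] at hx
          rw [Finset.mem_coe, Finset.mem_filter]
          constructor
          · rw [hmemP]
            refine ⟨⟨Finset.insert_subset hx.1 hSN, ?_⟩, hS, Finset.subset_insert _ _⟩
            rw [Finset.card_insert_of_notMem hx.2, hScard]
          · rfl
        · intro x hx y hy hxy
          simp only [Prod.mk.injEq] at hxy
          rw [Finset.mem_coe, Finset.mem_sdiff] at hx hy
          have : x ∈ insert y S := by rw [← hxy.1]; exact Finset.mem_insert_self x S
          rcases Finset.mem_insert.mp this with h | h
          · exact h
          · exact absurd h hx.2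
      -- upper bound on P.card
      have hup : P.card ≤ m * cov1.card + k.choose (m + 1) := by
        have hfib := Finset.card_eq_sum_card_fiberwise
          (f := Prod.fst) (s := P) (t := N.powersetCard (m + 1))
          (fun p hp => by
            have := ((hmemP p).mp hp).1
            rw [Finset.mem_coe, Finset.mem_powersetCard]; exact this)
        rw [hfib]
        rw [← Finset.sum_filter_add_sum_filter_not (N.powersetCard (m + 1))
          (fun S => ∃ j : Fin r, S ⊆ H j)]
        have hA : ∑ T ∈ (N.powersetCard (m + 1)).filter (fun S => ∃ j : Fin r, S ⊆ H j),
            (P.filter fun p => p.1 = T).card ≤ cov1.card * (m + 1) := by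
          rw [← smul_eq_mul, ← Finset.sum_const]
          apply Finset.sum_le_sum
          intro T hT
          have hTmem := hT
          rw [Finset.mem_filter, Finset.mem_powersetCard] at hTmem
          have hcard : (T.powersetCard m).card = m + 1 := by
            rw [Finset.card_powersetCard, hTmem.1.2, Nat.choose_succ_self_right]
          rw [← hcard]
          apply Finset.card_le_card_of_injOn (fun p => p.2)
          · intro p hp
            rw [Finset.mem_coe, Finset.mem_filter] at hp
            obtain ⟨hpP, hp1⟩ := hp
            rw [hmemP] at hpP
            rw [Finset.mem_coe, Finset.mem_powersetCard]
            refine ⟨hp1 ▸ hpP.2.2, ?_⟩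
            have := hpP.2.1
            rw [hcovm, Finset.mem_filter, Finset.mem_powersetCard] at this
            exact this.1.2
          · intro p hp q hq hpq
            rw [Finset.mem_coe, Finset.mem_filter] at hp hq
            exact Prod.ext (hp.2.trans hq.2.symm) hpq
        have hB : ∑ T ∈ (N.powersetCard (m + 1)).filter
              (fun S => ¬ ∃ j : Fin r, S ⊆ H j),
            (P.filter fun p => p.1 = T).card ≤
            ((N.powersetCard (m + 1)).filter (fun S => ¬ ∃ j : Fin r, S ⊆ H j)).card := by
          have hle : ∀ T ∈ (N.powersetCard (m + 1)).filter
              (fun S => ¬ ∃ j : Fin r, S ⊆ H j),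
              (P.filter fun p => p.1 = T).card ≤ 1 := by
            intro T hT
            rw [Finset.mem_filter, Finset.mem_powersetCard] at hT
            obtain ⟨⟨hTN, hTcard⟩, hTnc⟩ := hT
            apply Finset.card_le_one.mpr
            intro p hp q hq
            rw [Finset.mem_filter] at hp hq
            obtain ⟨hpP, hp1⟩ := hp
            obtain ⟨hqP, hq1⟩ := hq
            rw [hmemP] at hpP hqP
            -- show p.2 = q.2
            set S := p.2 with hSdef
            set S' := q.2 with hS'def
            have hScov := hpP.2.1
            have hS'cov := hqP.2.1
            rw [hcovm, Finset.mem_filter, Finset.mem_powersetCard] at hScov hS'cov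
            obtain ⟨⟨hSN, hScard⟩, j, hSj⟩ := hScov
            obtain ⟨⟨hS'N, hS'card⟩, j', hS'j⟩ := hS'cov
            have hST : S ⊆ T := hp1 ▸ hpP.2.2
            have hS'T : S' ⊆ T := hq1 ▸ hqP.2.2
            have hUT : S ∪ S' ⊆ T := Finset.union_subset hST hS'T
            have hUcard : (S ∪ S').card ≤ m + 1 := by
              rw [← hTcard]; exact Finset.card_le_card hUT
            have hint := Finset.card_union_add_card_inter S S'
            have hd1 : d - 1 ≤ (S ∩ S').card := by omega
            have hHeq := hsame j j' S S' hSj hS'j hd1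
            by_cases hSS : S = S'
            · exact Prod.ext (hp1.trans hq1.symm) hSS
            · exfalso
              have hUub : S ⊆ S ∪ S' := Finset.subset_union_left
              have hUne : S ≠ S ∪ S' := by
                intro h
                apply hSS
                have : S' ⊆ S := by
                  rw [h]; exact Finset.subset_union_right
                exact (Finset.eq_of_subset_of_card_le this (by omega)).symm
              have hUcard2 : m + 1 ≤ (S ∪ S').card := by
                have := Finset.card_lt_card (Finset.ssubset_iff_subset_ne.mpr ⟨hUub, hUne⟩)
                omega
              have hUeq : S ∪ S' = T :=
                Finset.eq_of_subset_of_card_le hUT (by omega)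
              apply hTnc
              refine ⟨j, ?_⟩
              rw [← hUeq]
              apply Finset.union_subset hSj
              rw [hHeq]; exact hS'j
          have h1 := Finset.sum_le_card_nsmul ((N.powersetCard (m + 1)).filter
            (fun S => ¬ ∃ j : Fin r, S ⊆ H j)) _ 1 hle
          simpa using h1
        have hadd := add_le_add hA hB
        refine le_trans hadd (le_of_eq ?_)
        have hsumc : cov1.card +
            ((N.powersetCard (m + 1)).filter (fun S => ¬ ∃ j : Fin r, S ⊆ H j)).card
            = k.choose (m + 1) := by
          rw [hcov1]
          rw [Finset.card_filter_add_card_filter_not]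
          rw [Finset.card_powersetCard, hN]
        calc cov1.card * (m + 1) +
            ((N.powersetCard (m + 1)).filter (fun S => ¬ ∃ j : Fin r, S ⊆ H j)).card
            = m * cov1.card + (cov1.card +
              ((N.powersetCard (m + 1)).filter (fun S => ¬ ∃ j : Fin r, S ⊆ H j)).card) := by
              ring
          _ = m * cov1.card + k.choose (m + 1) := by rw [hsumc]
      -- the binomial identity
      have hident : m * (k - 1).choose (m + 1) + k.choose (m + 1)
          = (k - m) * (k - 1).choose m := by
        have hch : (k - 1).choose (m + 1) * (m + 1)
            = (k - 1).choose m * (k - 1 - m) := Nat.choose_succ_right_eq (k - 1) m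
        have hpascal : k.choose (m + 1) = (k - 1).choose m + (k - 1).choose (m + 1) := by
          have hk1 : k = (k - 1) + 1 := by omega
          conv_lhs => rw [hk1]
          rw [Nat.choose_succ_succ]
        set a := (k - 1).choose m
        set b := (k - 1).choose (m + 1)
        set c := k - 1 - m with hc
        have hkm : k - m = c + 1 := by omega
        rw [hpascal, hkm]
        calc m * b + (a + b) = b * (m + 1) + a := by ring
          _ = a * c + a := by rw [hch]
          _ = (c + 1) * a := by ring
      -- combine
      have hbound : (k - m) * covm.card ≤ (k - m) * (k - 1).choose m := by
        calc (k - m) * covm.card ≤ P.card := hlow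
          _ ≤ m * cov1.card + k.choose (m + 1) := hup
          _ ≤ m * (k - 1).choose (m + 1) + k.choose (m + 1) := by
              have := Nat.mul_le_mul_left m hIH
              omega
          _ = (k - m) * (k - 1).choose m := hident
      exact Nat.le_of_mul_le_mul_left hbound (by omega)
  have part1 : ((N.powersetCard i).filter (fun S => ∃ j : Fin r, S ⊆ H j)).card ≤
      (k - 1).choose i := hmain (k - 1 - i) i rfl (by omega) hik
  refine ⟨part1, ?_⟩
  have hik' : i ≤ k := by omega
  have hkpos : 0 < k := by omega
  have hchpos : 0 < k.choose i := Nat.choose_pos hik'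
  have hident2 : (k - 1).choose i * k = k.choose i * (k - i) := by
    have := Nat.choose_mul_succ_eq (k - 1) i
    have hk1 : (k - 1) + 1 = k := by omega
    rw [hk1] at this
    exact this
  rw [div_le_div_iff₀ (by positivity) (by positivity)]
  have hcast : ((k : ℚ) - (i : ℚ)) = ((k - i : ℕ) : ℚ) := by
    rw [Nat.cast_sub hik']
  rw [hcast]
  have hfinal : ((N.powersetCard i).filter (fun S => ∃ j : Fin r, S ⊆ H j)).card * k
      ≤ k.choose i * (k - i) := by
    calc ((N.powersetCard i).filter (fun S => ∃ j : Fin r, S ⊆ H j)).card * k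
        ≤ (k - 1).choose i * k := Nat.mul_le_mul_right k part1
      _ = k.choose i * (k - i) := hident2
  calc (((N.powersetCard i).filter (fun S => ∃ j : Fin r, S ⊆ H j)).card : ℚ) * k
      = ((((N.powersetCard i).filter (fun S => ∃ j : Fin r, S ⊆ H j)).card * k : ℕ) : ℚ) := by
        push_cast; ring
    _ ≤ ((k.choose i * (k - i) : ℕ) : ℚ) := by exact_mod_cast hfinal
    _ = ((k - i : ℕ) : ℚ) * (k.choose i : ℚ) := by push_cast; ring
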